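/- Let σ_w, σ_n, σ_wn be positive reals with σ_wn < (σ_w + σ_n)/2, and let a ∈ (0,1). Then the function x ↦ σ_w·H_a^0(x) + σ_n·H_{1−a}^0(1 − x) − (σ_wn/2)·x^2 is strictly convex on the interval (0,1). -/

import Mathlib

/-- `H_a^1` : the secant slope of `F x = x * log x` at `a`, extended continuously at `x = a`. -/
noncomputable def Hone (a t : ℝ) : ℝ :=
  if t = a then Real.log a + 1 else (t * Real.log t - a * Real.log a) / (t - a)

/-- `H_a^0(x) = ∫_a^x H_a^1(t) dt`. -/
noncomputable def Hzero (a x : ℝ) : ℝ := ∫ t in a..x, Hone a t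

open Set intervalIntegral

/-- Key inequality: for `b, t ∈ (0,1)`, `(t-b)²/2 ≤ t - b - b (log t - log b)`. -/
lemma key_ineq {b t : ℝ} (hb : b ∈ Set.Ioo (0:ℝ) 1) (ht : t ∈ Set.Ioo (0:ℝ) 1) :
    (t - b) ^ 2 / 2 ≤ t - b - b * (Real.log t - Real.log b) := by
  obtain ⟨hb0, hb1⟩ := hb
  obtain ⟨ht0, ht1⟩ := ht
  have hI1 : ∀ x y : ℝ, 0 < x → 0 < y →
      (∫ u in x..y, (1 - b * u⁻¹)) = (y - x) - b * (Real.log y - Real.log x) := by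
    intro x y hx hy
    have h0 : (0:ℝ) ∉ Set.uIcc x y := Set.notMem_uIcc_of_lt hx hy
    have hcinv : ContinuousOn (fun u : ℝ => b * u⁻¹) (Set.uIcc x y) :=
      continuousOn_const.mul (continuousOn_inv₀.mono (fun u hu => by
        simp only [Set.mem_compl_iff, Set.mem_singleton_iff]
        rintro rfl; exact h0 hu))
    rw [intervalIntegral.integral_sub intervalIntegrable_const hcinv.intervalIntegrable,
      integral_one, intervalIntegral.integral_const_mul,
      integral_inv h0, Real.log_div hy.ne' hx.ne']
  have hI2 : ∀ x y : ℝ, (∫ u in x..y, (u - b)) = (y ^ 2 - x ^ 2) / 2 - b * (y - x) := by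
    intro x y
    rw [intervalIntegral.integral_sub intervalIntegrable_id intervalIntegrable_const,
      integral_id, intervalIntegral.integral_const]
    simp [smul_eq_mul]; ring
  rcases le_total b t with hbt | htb
  · have hmono : (∫ u in b..t, (u - b)) ≤ ∫ u in b..t, (1 - b * u⁻¹) := by
      apply intervalIntegral.integral_mono_on hbt
      · exact ((continuous_id.sub continuous_const).intervalIntegrable _ _)
      · apply ContinuousOn.intervalIntegrable
        exact continuousOn_const.sub (continuousOn_const.mul (continuousOn_inv₀.mono
          (fun u hu => by
            simp only [Set.mem_compl_iff, Set.mem_singleton_iff]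
            rintro rfl
            exact absurd hu (Set.notMem_uIcc_of_lt hb0 ht0))))
      · intro u hu
        have hu0 : 0 < u := lt_of_lt_of_le hb0 hu.1
        have hub : b ≤ u := hu.1
        have hu1 : u ≤ 1 := le_trans hu.2 ht1.le
        have hkey : 1 - b * u⁻¹ - (u - b) = (u - b) * (1 - u) / u := by
          field_simp
        have : 0 ≤ (u - b) * (1 - u) / u :=
          div_nonneg (mul_nonneg (by linarith) (by linarith)) hu0.le
        linarith
    rw [hI1 b t hb0 ht0, hI2 b t] at hmono
    nlinarith [hmono]
  · have hmono : (∫ u in t..b, (1 - b * u⁻¹)) ≤ ∫ u in t..b, (u - b) := by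
      apply intervalIntegral.integral_mono_on htb
      · apply ContinuousOn.intervalIntegrable
        exact continuousOn_const.sub (continuousOn_const.mul (continuousOn_inv₀.mono
          (fun u hu => by
            simp only [Set.mem_compl_iff, Set.mem_singleton_iff]
            rintro rfl
            exact absurd hu (Set.notMem_uIcc_of_lt ht0 hb0))))
      · exact ((continuous_id.sub continuous_const).intervalIntegrable _ _)
      · intro u hu
        have hu0 : 0 < u := lt_of_lt_of_le ht0 hu.1
        have hub : u ≤ b := hu.2
        have hu1 : u ≤ 1 := le_trans hu.2 hb1.le
        have hkey : (u - b) - (1 - b * u⁻¹) = -((u - b) * (1 - u) / u) := by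
          field_simp; ring
        have : (u - b) * (1 - u) / u ≤ 0 :=
          div_nonpos_of_nonpos_of_nonneg (mul_nonpos_of_nonpos_of_nonneg (by linarith) (by linarith)) hu0.le
        linarith
    rw [hI1 t b ht0 hb0, hI2 t b] at hmono
    nlinarith [hmono]

/-- `Hone a` is continuous at every positive point. -/
lemma contAt_Hone {a x : ℝ} (ha : 0 < a) (hx : 0 < x) : ContinuousAt (Hone a) x := by
  rcases eq_or_ne x a with rfl | hxa
  · have hF : HasDerivAt (fun t : ℝ => t * Real.log t) (Real.log x + 1) x :=
      Real.hasDerivAt_mul_log hx.ne'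
    have hslope := hasDerivAt_iff_tendsto_slope.mp hF
    rw [ContinuousAt, ← nhdsNE_sup_pure x, Filter.tendsto_sup]
    constructor
    · have hval : Hone x x = Real.log x + 1 := by simp [Hone]
      rw [hval]
      refine hslope.congr' ?_
      filter_upwards [self_mem_nhdsWithin] with t ht
      have ht' : t ≠ x := ht
      simp [Hone, slope_def_field, ht']
    · exact tendsto_pure_nhds _ _
  · have hev : ∀ᶠ t in nhds x, Hone a t = (t * Real.log t - a * Real.log a) / (t - a) := by
      filter_upwards [isOpen_ne.mem_nhds hxa] with t ht
      simp [Hone, ht]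
    have hc : ContinuousAt (fun t : ℝ => (t * Real.log t - a * Real.log a) / (t - a)) x := by
      apply ContinuousAt.div
      · exact (continuousAt_id.mul (Real.continuousAt_log hx.ne')).sub continuousAt_const
      · exact continuousAt_id.sub continuousAt_const
      · exact sub_ne_zero.mpr hxa
    exact hc.congr (Filter.EventuallyEq.symm hev)

/-- Derivative of `Hone a` away from `a`. -/
lemma hasDerivAt_Hone {a x : ℝ} (hx : 0 < x) (hxa : x ≠ a) :
    HasDerivAt (Hone a) ((x - a - a * (Real.log x - Real.log a)) / (x - a) ^ 2) x := by
  have hN : HasDerivAt (fun t : ℝ => t * Real.log t - a * Real.log a) (Real.log x + 1) x :=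
    (Real.hasDerivAt_mul_log hx.ne').sub_const _
  have hD : HasDerivAt (fun t : ℝ => t - a) 1 x := (hasDerivAt_id x).sub_const a
  have hq := hN.div hD (sub_ne_zero.mpr hxa)
  have hval : ((Real.log x + 1) * (x - a) - (x * Real.log x - a * Real.log a) * 1) / (x - a) ^ 2
      = (x - a - a * (Real.log x - Real.log a)) / (x - a) ^ 2 := by
    congr 1; ring
  rw [hval] at hq
  refine hq.congr_of_eventuallyEq ?_
  filter_upwards [isOpen_ne.mem_nhds hxa] with t ht
  simp [Hone, ht]

/-- `t ↦ Hone a t - t/2` is monotone on `(0,1)`. -/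
lemma mono_Hone_sub {a : ℝ} (ha : a ∈ Set.Ioo (0:ℝ) 1) :
    MonotoneOn (fun t => Hone a t - t / 2) (Set.Ioo (0:ℝ) 1) := by
  obtain ⟨ha0, ha1⟩ := ha
  set φ := fun t => Hone a t - t / 2 with hφ
  have hd : ∀ x ∈ Set.Ioo (0:ℝ) 1, x ≠ a → HasDerivAt φ
      ((x - a - a * (Real.log x - Real.log a)) / (x - a) ^ 2 - 1 / 2) x := by
    intro x hx hxa
    have := (hasDerivAt_Hone hx.1 hxa).sub ((hasDerivAt_id x).div_const 2)
    exact this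
  have hdpos : ∀ x ∈ Set.Ioo (0:ℝ) 1, x ≠ a → 0 ≤ deriv φ x := by
    intro x hx hxa
    rw [(hd x hx hxa).deriv]
    have hne : x - a ≠ 0 := sub_ne_zero.mpr hxa
    have hsq : (0:ℝ) < (x - a) ^ 2 := by positivity
    have hk := key_ineq ⟨ha0, ha1⟩ hx
    rw [sub_nonneg, le_div_iff₀ hsq]
    linarith
  have hcont : ContinuousOn φ (Set.Ioo (0:ℝ) 1) := fun x hx =>
    (((contAt_Hone ha0 hx.1)).sub ((continuousAt_id).div continuousAt_const (by norm_num))).continuousWithinAt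
  have m1 : MonotoneOn φ (Set.Ioc (0:ℝ) a) := by
    apply monotoneOn_of_deriv_nonneg (convex_Ioc 0 a)
    · exact hcont.mono (fun t ht => ⟨ht.1, lt_of_le_of_lt ht.2 ha1⟩)
    · rw [interior_Ioc]
      intro x hx
      exact (hd x ⟨hx.1, hx.2.trans ha1⟩ hx.2.ne).differentiableAt.differentiableWithinAt
    · rw [interior_Ioc]
      intro x hx
      exact hdpos x ⟨hx.1, hx.2.trans ha1⟩ hx.2.ne
  have m2 : MonotoneOn φ (Set.Ico a 1) := by
    apply monotoneOn_of_deriv_nonneg (convex_Ico a 1)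
    · exact hcont.mono (fun t ht => ⟨lt_of_lt_of_le ha0 ht.1, ht.2⟩)
    · rw [interior_Ico]
      intro x hx
      exact (hd x ⟨ha0.trans hx.1, hx.2⟩ hx.1.ne').differentiableAt.differentiableWithinAt
    · rw [interior_Ico]
      intro x hx
      exact hdpos x ⟨ha0.trans hx.1, hx.2⟩ hx.1.ne'
  intro x hx y hy hxy
  rcases le_total y a with h | h
  · exact m1 ⟨hx.1, hxy.trans h⟩ ⟨hy.1, h⟩ hxy
  · rcases le_total x a with h' | h'
    · calc φ x ≤ φ a := m1 ⟨hx.1, h'⟩ ⟨ha0, le_refl a⟩ h'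
        _ ≤ φ y := m2 ⟨le_refl a, ha1⟩ ⟨h, hy.2⟩ h
    · exact m2 ⟨h', hx.2⟩ ⟨h'.trans hxy, hy.2⟩ hxy

/-- If the positive energy parameters satisfy `σ_wn < (σ_w + σ_n)/2`, then for `a ∈ (0,1)`
the function `x ↦ σ_w H_a^0(x) + σ_n H_{1-a}^0(1-x) - (σ_wn/2) x^2`
is strictly convex on `(0,1)`. -/
theorem stmt4 (σw σn σwn : ℝ) (hσw : 0 < σw) (hσn : 0 < σn) (hσwn : 0 < σwn)
    (hcond : σwn < (σw + σn) / 2) (a : ℝ) (ha : a ∈ Set.Ioo (0 : ℝ) 1) :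
    StrictConvexOn ℝ (Set.Ioo (0 : ℝ) 1)
      (fun x => σw * Hzero a x + σn * Hzero (1 - a) (1 - x) - σwn / 2 * x ^ 2) := by
  obtain ⟨ha0, ha1⟩ := ha
  have ha' : (1 - a) ∈ Set.Ioo (0:ℝ) 1 := ⟨by linarith, by linarith⟩
  set f := fun x => σw * Hzero a x + σn * Hzero (1 - a) (1 - x) - σwn / 2 * x ^ 2 with hf
  set g := fun x => σw * Hone a x - σn * Hone (1 - a) (1 - x) - σwn * x with hg
  -- derivative of Hzero
  have hHz : ∀ b, b ∈ Set.Ioo (0:ℝ) 1 → ∀ x ∈ Set.Ioo (0:ℝ) 1,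
      HasDerivAt (Hzero b) (Hone b x) x := by
    intro b hb x hx
    have hcont : ContinuousOn (Hone b) (Set.Ioo (0:ℝ) 1) := fun y hy =>
      (contAt_Hone hb.1 hy.1).continuousWithinAt
    have hsub : Set.uIcc b x ⊆ Set.Ioo (0:ℝ) 1 := Set.ordConnected_Ioo.uIcc_subset hb hx
    have hint : IntervalIntegrable (Hone b) MeasureTheory.volume b x :=
      (hcont.mono hsub).intervalIntegrable
    exact intervalIntegral.integral_hasDerivAt_right hint
      (hcont.stronglyMeasurableAtFilter isOpen_Ioo x hx) (contAt_Hone hb.1 hx.1)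
  have hf' : ∀ x ∈ Set.Ioo (0:ℝ) 1, HasDerivAt f (g x) x := by
    intro x hx
    have hx' : (1 - x) ∈ Set.Ioo (0:ℝ) 1 := ⟨by linarith [hx.2], by linarith [hx.1]⟩
    have h1 : HasDerivAt (fun x => σw * Hzero a x) (σw * Hone a x) x :=
      (hHz a ⟨ha0, ha1⟩ x hx).const_mul σw
    have h2 : HasDerivAt (fun x : ℝ => Hzero (1 - a) (1 - x)) (-Hone (1 - a) (1 - x)) x := by
      have hinner : HasDerivAt (fun x : ℝ => 1 - x) (-1) x := (hasDerivAt_id x).const_sub 1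
      have := (hHz (1 - a) ha' (1 - x) hx').comp x hinner
      rw [mul_neg_one] at this; exact this
    have h3 : HasDerivAt (fun x : ℝ => σwn / 2 * x ^ 2) (σwn * x) x := by
      have := (hasDerivAt_pow 2 x).const_mul (σwn / 2)
      refine this.congr_deriv ?_
      ring
    have := (h1.add (h2.const_mul σn)).sub h3
    refine this.congr_deriv ?_
    simp only [hg]; ring
  have hderiv_eq : ∀ x ∈ Set.Ioo (0:ℝ) 1, deriv f x = g x := fun x hx => (hf' x hx).deriv
  have hcontf : ContinuousOn f (Set.Ioo (0:ℝ) 1) := fun x hx =>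
    (hf' x hx).continuousAt.continuousWithinAt
  have hgmono : StrictMonoOn g (Set.Ioo (0:ℝ) 1) := by
    intro x hx y hy hxy
    have hx' : (1 - x) ∈ Set.Ioo (0:ℝ) 1 := ⟨by linarith [hx.2], by linarith [hx.1]⟩
    have hy' : (1 - y) ∈ Set.Ioo (0:ℝ) 1 := ⟨by linarith [hy.2], by linarith [hy.1]⟩
    have A1 := mono_Hone_sub ⟨ha0, ha1⟩ hx hy hxy.le
    have A2 := mono_Hone_sub ha' hy' hx' (by linarith)
    simp only at A1 A2
    have e1 : σw * ((y - x) / 2) ≤ σw * (Hone a y - Hone a x) :=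
      mul_le_mul_of_nonneg_left (by linarith) hσw.le
    have e2 : σn * ((y - x) / 2) ≤ σn * (Hone (1 - a) (1 - x) - Hone (1 - a) (1 - y)) :=
      mul_le_mul_of_nonneg_left (by linarith) hσn.le
    have e3 : 0 < ((σw + σn) / 2 - σwn) * (y - x) :=
      mul_pos (by linarith) (by linarith)
    simp only [hg]
    nlinarith [e1, e2, e3]
  apply StrictMonoOn.strictConvexOn_of_deriv (convex_Ioo 0 1) hcontf
  rw [interior_Ioo]
  intro x hx y hy hxy
  rw [hderiv_eq x hx, hderiv_eq y hy]
  exact hgmono hx hy hxy
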